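/- Let n ≥ 2 and let A be a nonsingular n×n 0–1 matrix such that A⁻¹ is equimodular with A⁻¹ ∈ {−α, α}^{n×n}. Then α = 1/(2m) for some integer m. -/

import Mathlib

open Matrix Finset

theorem stmt2 {n : ℕ} (hn : 2 ≤ n) (A : Matrix (Fin n) (Fin n) ℝ)
    (hA : IsUnit A.det)
    (h01 : ∀ i j, A i j = 0 ∨ A i j = 1)
    (α : ℝ) (hequi : ∀ i j, A⁻¹ i j = α ∨ A⁻¹ i j = -α) :
    ∃ m : ℤ, α = 1 / (2 * (m : ℝ)) := by
  rcases eq_or_ne α 0 with h0 | h0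
  · exact ⟨0, by simp [h0]⟩
  have hinv : A⁻¹ * A = 1 := nonsing_inv_mul A hA
  set e : Fin n → Fin n → ℤ := fun i k => if A⁻¹ i k = α then 1 else -1 with he_def
  set a : Fin n → Fin n → ℤ := fun k j => if A k j = 0 then 0 else 1 with ha_def
  have he : ∀ i k, A⁻¹ i k = (e i k : ℝ) * α := by
    intro i k
    rcases hequi i k with h | h <;> simp [he_def, h]
  have ha : ∀ k j, A k j = (a k j : ℝ) := by
    intro k j
    rcases h01 k j with h | h <;> simp [ha_def, h]
  set S : Fin n → Fin n → ℤ := fun i j => ∑ k, e i k * a k j with hS_def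
  have hS : ∀ i j, ((S i j : ℝ)) * α = (1 : Matrix (Fin n) (Fin n) ℝ) i j := by
    intro i j
    rw [← hinv]
    simp only [hS_def, Matrix.mul_apply]
    push_cast
    rw [Finset.sum_mul]
    refine Finset.sum_congr rfl fun k _ => ?_
    rw [he, ha]
    ring
  set i0 : Fin n := ⟨0, by omega⟩ with hi0
  set i1 : Fin n := ⟨1, by omega⟩ with hi1
  have h01' : i0 ≠ i1 := by
    intro h
    have : (0 : ℕ) = 1 := congrArg Fin.val h
    omega
  have hzero : S i1 i0 = 0 := by
    have := hS i1 i0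
    rw [Matrix.one_apply_ne (Ne.symm h01')] at this
    have hc : (S i1 i0 : ℝ) = 0 := by
      rcases mul_eq_zero.mp this with h | h
      · exact h
      · exact absurd h h0
    exact_mod_cast hc
  have hone : ((S i0 i0 : ℝ)) * α = 1 := by
    have := hS i0 i0; rwa [Matrix.one_apply_eq] at this
  have heven : (2 : ℤ) ∣ S i0 i0 := by
    have hsub : S i0 i0 - S i1 i0 = ∑ k, (e i0 k - e i1 k) * a k i0 := by
      simp only [hS_def, ← Finset.sum_sub_distrib]
      exact Finset.sum_congr rfl fun k _ => by ring
    have hdvd : (2 : ℤ) ∣ S i0 i0 - S i1 i0 := by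
      rw [hsub]
      refine Finset.dvd_sum fun k _ => Dvd.dvd.mul_right ?_ _
      simp only [he_def]
      by_cases h1 : A⁻¹ i0 k = α <;> by_cases h2 : A⁻¹ i1 k = α <;> simp [h1, h2] <;> decide
    simpa [hzero] using hdvd
  obtain ⟨m, hm⟩ := heven
  refine ⟨m, ?_⟩
  rw [hm] at hone
  push_cast at hone
  have hm0 : (2 : ℝ) * (m : ℝ) ≠ 0 := by
    intro h
    rw [h, zero_mul] at hone
    exact one_ne_zero hone.symm
  rw [eq_div_iff hm0]
  linarith
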